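/- For every even positive integer n, the sum over k from 0 to n of binomial(n,k)*binomial(n+k,k)*binomial(2k,k) / ((-4)^k * (k+1)^3) equals -2/(n(n+1)) + ((2n+1)^2/(n(n+1))) * binomial(n, n/2)^2 / 16^(n/2) (as rational numbers). -/

import Mathlib

private def Fq (n k : ℕ) : ℚ :=
  (Nat.choose n k * Nat.choose (n + k) k * Nat.choose (2 * k) k : ℚ)
    / ((-4) ^ k * (k + 1) ^ 3)

private def Gq (n k : ℕ) : ℚ :=
  2 * (2 * (n : ℚ) + 3) *
    (Nat.choose (n + 2) k * Nat.choose (n + k) k * Nat.choose (2 * k) k : ℚ) / (-4) ^ k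

private def Sq (n : ℕ) : ℚ := ∑ k ∈ Finset.range (n + 1), Fq n k

private def Tq (n : ℕ) : ℚ :=
  if Even n then
    -2 / ((n : ℚ) * (n + 1))
      + ((2 * (n : ℚ) + 1) ^ 2 / ((n : ℚ) * (n + 1)))
          * (Nat.choose n (n / 2) : ℚ) ^ 2 / 16 ^ (n / 2)
  else
    -2 / ((n : ℚ) * (n + 1))
      + ((4 * (n : ℚ) ^ 4 + 8 * (n : ℚ) ^ 3 + 3 * (n : ℚ) ^ 2 - (n : ℚ) + 1)
            / ((n : ℚ) ^ 2 * ((n : ℚ) + 1) ^ 2))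
          * (Nat.choose (n - 1) ((n - 1) / 2) : ℚ)
          * (Nat.choose (n + 1) ((n + 1) / 2) : ℚ) / 4 ^ n

private lemma cast_choose_sub_right (m k : ℕ) :
    ((k : ℚ) + 1) * (Nat.choose m (k + 1) : ℚ)
      = ((m : ℚ) - k) * (Nat.choose m k : ℚ) := by
  rcases le_or_gt k m with h | h
  · have h1 : ((Nat.choose m (k + 1) * (k + 1) : ℕ) : ℚ)
        = ((Nat.choose m k * (m - k) : ℕ) : ℚ) := by
      exact_mod_cast congrArg (fun x : ℕ => (x : ℚ)) (Nat.choose_succ_right_eq m k)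
    push_cast [Nat.cast_sub h] at h1
    linear_combination h1
  · rw [Nat.choose_eq_zero_of_lt h, Nat.choose_eq_zero_of_lt (by omega)]
    push_cast
    ring

private lemma cast_choose_sub_left (m k : ℕ) :
    ((m : ℚ) + 1 - k) * (Nat.choose (m + 1) k : ℚ)
      = ((m : ℚ) + 1) * (Nat.choose m k : ℚ) := by
  rcases le_or_gt k (m + 1) with h | h
  · have h1 : ((Nat.choose m k * (m + 1) : ℕ) : ℚ)
        = ((Nat.choose (m + 1) k * (m + 1 - k) : ℕ) : ℚ) := by
      exact_mod_cast congrArg (fun x : ℕ => (x : ℚ)) (Nat.choose_mul_succ_eq m k)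
    push_cast [Nat.cast_sub h] at h1
    linear_combination -h1
  · rw [Nat.choose_eq_zero_of_lt h, Nat.choose_eq_zero_of_lt (by omega)]
    push_cast
    ring

private lemma cast_choose_add (n k : ℕ) :
    ((n : ℚ) + 1) * (Nat.choose (n + 1 + k) k : ℚ)
      = ((n : ℚ) + k + 1) * (Nat.choose (n + k) k : ℚ) := by
  have hs : Nat.choose (n + k) k = Nat.choose (n + k) n := by
    have h := Nat.choose_symm (Nat.le_add_right n k)
    rwa [Nat.add_sub_cancel_left] at h
  have hs2 : Nat.choose (n + k + 1) (n + 1) = Nat.choose (n + k + 1) k := by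
    have h := Nat.choose_symm (show n + 1 ≤ n + k + 1 by omega)
    rw [show n + k + 1 - (n + 1) = k from by omega] at h
    exact h.symm
  have h2 := Nat.add_one_mul_choose_eq (n + k) n
  have h3 : (n + k + 1) * Nat.choose (n + k) k = Nat.choose (n + 1 + k) k * (n + 1) := by
    rw [hs, show n + 1 + k = n + k + 1 from by omega, ← hs2]
    exact h2
  have h4 : (((n + k + 1) * Nat.choose (n + k) k : ℕ) : ℚ)
      = ((Nat.choose (n + 1 + k) k * (n + 1) : ℕ) : ℚ) := by
    exact_mod_cast congrArg (fun x : ℕ => (x : ℚ)) h3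
  push_cast at h4
  linear_combination -h4

private lemma cast_choose_succ_diag (n k : ℕ) :
    ((k : ℚ) + 1) * (Nat.choose (n + (k + 1)) (k + 1) : ℚ)
      = ((n : ℚ) + k + 1) * (Nat.choose (n + k) k : ℚ) := by
  have h2 := Nat.add_one_mul_choose_eq (n + k) k
  have h4 : (((n + k + 1) * Nat.choose (n + k) k : ℕ) : ℚ)
      = ((Nat.choose (n + k + 1) (k + 1) * (k + 1) : ℕ) : ℚ) := by
    exact_mod_cast congrArg (fun x : ℕ => (x : ℚ)) h2
  push_cast at h4
  have : Nat.choose (n + (k + 1)) (k + 1) = Nat.choose (n + k + 1) (k + 1) := by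
    rw [show n + (k + 1) = n + k + 1 from by omega]
  rw [this]
  linear_combination -h4

private lemma cast_central_succ (k : ℕ) :
    ((k : ℚ) + 1) * (Nat.choose (2 * (k + 1)) (k + 1) : ℚ)
      = 2 * (2 * (k : ℚ) + 1) * (Nat.choose (2 * k) k : ℚ) := by
  have h1 : Nat.choose (2 * k + 2) (k + 1) = 2 * Nat.choose (2 * k + 1) (k + 1) := by
    have hp : Nat.choose (2 * k + 2) (k + 1)
        = Nat.choose (2 * k + 1) k + Nat.choose (2 * k + 1) (k + 1) := by
      have := Nat.choose_succ_succ (2 * k + 1) k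
      simpa [show (2 * k + 1) + 1 = 2 * k + 2 from by omega] using this
    have hsym : Nat.choose (2 * k + 1) k = Nat.choose (2 * k + 1) (k + 1) := by
      have h := Nat.choose_symm (show k + 1 ≤ 2 * k + 1 by omega)
      rw [show 2 * k + 1 - (k + 1) = k from by omega] at h
      exact h
    omega
  have h2 := Nat.add_one_mul_choose_eq (2 * k) k
  have h3 : (k + 1) * Nat.choose (2 * k + 2) (k + 1)
      = 2 * ((2 * k + 1) * Nat.choose (2 * k) k) := by
    rw [h1, h2]
    ring
  have h4 : (((k + 1) * Nat.choose (2 * k + 2) (k + 1) : ℕ) : ℚ)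
      = ((2 * ((2 * k + 1) * Nat.choose (2 * k) k) : ℕ) : ℚ) := by
    exact_mod_cast congrArg (fun x : ℕ => (x : ℚ)) h3
  push_cast at h4
  rw [show 2 * (k + 1) = 2 * k + 2 from by omega]
  linear_combination h4

private lemma step (n k : ℕ) :
    (n : ℚ) ^ 3 * ((n : ℚ) + 2) * Fq n k
      + (6 * (n : ℚ) ^ 3 + 27 * (n : ℚ) ^ 2 + 37 * (n : ℚ) + 15) * Fq (n + 1) k
      - ((n : ℚ) + 1) * ((n : ℚ) + 3) ^ 3 * Fq (n + 2) k
      = Gq n (k + 1) - Gq n k := by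
  have hn1 : ((n : ℚ) + 1) ≠ 0 := by positivity
  have hn2 : ((n : ℚ) + 2) ≠ 0 := by positivity
  have hk1 : ((k : ℚ) + 1) ≠ 0 := by positivity
  have h4k : ((-4 : ℚ)) ^ k ≠ 0 := pow_ne_zero _ (by norm_num)
  have e1 : (Nat.choose n k : ℚ)
      = ((n : ℚ) + 1 - k) * (Nat.choose (n + 1) k : ℚ) / ((n : ℚ) + 1) := by
    rw [eq_div_iff hn1]
    linear_combination -cast_choose_sub_left n k
  have e2 : (Nat.choose (n + 1) k : ℚ)
      = ((n : ℚ) + 2 - k) * (Nat.choose (n + 2) k : ℚ) / ((n : ℚ) + 2) := by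
    rw [eq_div_iff hn2]
    have h := cast_choose_sub_left (n + 1) k
    rw [show n + 1 + 1 = n + 2 from by omega] at h
    push_cast at h
    linear_combination -h
  have e5 : (Nat.choose (n + 2) (k + 1) : ℚ)
      = ((n : ℚ) + 2 - k) * (Nat.choose (n + 2) k : ℚ) / ((k : ℚ) + 1) := by
    rw [eq_div_iff hk1]
    have h := cast_choose_sub_right (n + 2) k
    push_cast at h
    linear_combination h
  have e4 : (Nat.choose (n + 2 + k) k : ℚ)
      = ((n : ℚ) + k + 2) * (Nat.choose (n + 1 + k) k : ℚ) / ((n : ℚ) + 2) := by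
    rw [eq_div_iff hn2]
    have h := cast_choose_add (n + 1) k
    rw [show n + 1 + 1 + k = n + 2 + k from by omega] at h
    push_cast at h
    linear_combination h
  have e3 : (Nat.choose (n + 1 + k) k : ℚ)
      = ((n : ℚ) + k + 1) * (Nat.choose (n + k) k : ℚ) / ((n : ℚ) + 1) := by
    rw [eq_div_iff hn1]
    linear_combination cast_choose_add n k
  have e6 : (Nat.choose (n + (k + 1)) (k + 1) : ℚ)
      = ((n : ℚ) + k + 1) * (Nat.choose (n + k) k : ℚ) / ((k : ℚ) + 1) := by
    rw [eq_div_iff hk1]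
    linear_combination cast_choose_succ_diag n k
  have e7 : (Nat.choose (2 * (k + 1)) (k + 1) : ℚ)
      = 2 * (2 * (k : ℚ) + 1) * (Nat.choose (2 * k) k : ℚ) / ((k : ℚ) + 1) := by
    rw [eq_div_iff hk1]
    linear_combination cast_central_succ k
  simp only [Fq, Gq]
  rw [e1, e2, e5, e4, e3, e6, e7, pow_succ]
  field_simp
  ring

private lemma Gq_zero (n : ℕ) : Gq n 0 = 2 * (2 * (n : ℚ) + 3) := by
  simp [Gq]

private lemma Gq_top (n : ℕ) : Gq n (n + 3) = 0 := by
  have h : Nat.choose (n + 2) (n + 3) = 0 := Nat.choose_eq_zero_of_lt (by omega)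
  simp [Gq, h]

private lemma Fq_zero_of_lt {n k : ℕ} (h : n < k) : Fq n k = 0 := by
  simp [Fq, Nat.choose_eq_zero_of_lt h]

private lemma rec_S (n : ℕ) :
    (n : ℚ) ^ 3 * ((n : ℚ) + 2) * Sq n
      + (6 * (n : ℚ) ^ 3 + 27 * (n : ℚ) ^ 2 + 37 * (n : ℚ) + 15) * Sq (n + 1)
      - ((n : ℚ) + 1) * ((n : ℚ) + 3) ^ 3 * Sq (n + 2)
      = -2 * (2 * (n : ℚ) + 3) := by
  have htel : ∑ k ∈ Finset.range (n + 3),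
      ((n : ℚ) ^ 3 * ((n : ℚ) + 2) * Fq n k
        + (6 * (n : ℚ) ^ 3 + 27 * (n : ℚ) ^ 2 + 37 * (n : ℚ) + 15) * Fq (n + 1) k
        - ((n : ℚ) + 1) * ((n : ℚ) + 3) ^ 3 * Fq (n + 2) k)
      = Gq n (n + 3) - Gq n 0 := by
    rw [← Finset.sum_range_sub (Gq n) (n + 3)]
    exact Finset.sum_congr rfl fun k _ => step n k
  have h1 : ∑ k ∈ Finset.range (n + 3), Fq n k = Sq n := by
    rw [show n + 3 = (n + 1) + 1 + 1 from by omega, Finset.sum_range_succ,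
      Finset.sum_range_succ]
    rw [Fq_zero_of_lt (show n < n + 1 by omega),
      Fq_zero_of_lt (show n < n + 1 + 1 by omega), Sq]
    ring
  have h2 : ∑ k ∈ Finset.range (n + 3), Fq (n + 1) k = Sq (n + 1) := by
    rw [show n + 3 = (n + 2) + 1 from by omega, Finset.sum_range_succ]
    rw [Fq_zero_of_lt (show n + 1 < n + 2 by omega), Sq,
      show (n + 1) + 1 = n + 2 from by omega]
    ring
  have h3 : ∑ k ∈ Finset.range (n + 3), Fq (n + 2) k = Sq (n + 2) := by
    rw [Sq, show (n + 2) + 1 = n + 3 from by omega]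
  rw [Finset.sum_sub_distrib, Finset.sum_add_distrib, ← Finset.mul_sum, ← Finset.mul_sum,
    ← Finset.mul_sum, h1, h2, h3, Gq_top, Gq_zero] at htel
  linear_combination htel

private lemma pow4_odd (m : ℕ) : (4 : ℚ) ^ (2 * m + 1) = 4 * 16 ^ m := by
  rw [pow_succ, pow_mul]
  norm_num
  ring

set_option maxHeartbeats 2000000 in
private lemma rec_T (n : ℕ) (hn : 1 ≤ n) :
    (n : ℚ) ^ 3 * ((n : ℚ) + 2) * Tq n
      + (6 * (n : ℚ) ^ 3 + 27 * (n : ℚ) ^ 2 + 37 * (n : ℚ) + 15) * Tq (n + 1)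
      - ((n : ℚ) + 1) * ((n : ℚ) + 3) ^ 3 * Tq (n + 2)
      = -2 * (2 * (n : ℚ) + 3) := by
  rcases Nat.even_or_odd n with he | ho
  · obtain ⟨m, rfl⟩ := he
    rw [show m + m = 2 * m from by omega] at hn ⊢
    have hm : 1 ≤ m := by omega
    have hev : Even (2 * m) := ⟨m, by omega⟩
    have hodd : ¬ Even (2 * m + 1) := by rw [Nat.even_iff]; omega
    have hev2 : Even (2 * m + 2) := by rw [Nat.even_iff]; omega
    rw [show 2 * m + 2 = 2 * (m + 1) from by omega]
    have hev2' : Even (2 * (m + 1)) := ⟨m + 1, by omega⟩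
    simp only [Tq, if_pos hev, if_neg hodd, if_pos hev2']
    rw [show 2 * m / 2 = m from by omega,
      show 2 * m + 1 - 1 = 2 * m from by omega,
      show (2 * m) / 2 = m from by omega,
      show 2 * m + 1 + 1 = 2 * (m + 1) from by omega,
      show 2 * (m + 1) / 2 = m + 1 from by omega]
    have hm1 : ((m : ℚ) + 1) ≠ 0 := by positivity
    have ey : (Nat.choose (2 * (m + 1)) (m + 1) : ℚ)
        = 2 * (2 * (m : ℚ) + 1) * (Nat.choose (2 * m) m : ℚ) / ((m : ℚ) + 1) := by
      rw [eq_div_iff hm1]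
      linear_combination cast_central_succ m
    rw [ey, pow4_odd m, pow_succ]
    have hmq : (1 : ℚ) ≤ (m : ℚ) := by exact_mod_cast hm
    have hm0 : (m : ℚ) ≠ 0 := by linarith
    have h16 : ((16 : ℚ) ^ m) ≠ 0 := by positivity
    have h2m1 : (2 * (m : ℚ) + 1) ≠ 0 := by positivity
    have h2m3 : (2 * (m : ℚ) + 3) ≠ 0 := by positivity
    push_cast
    field_simp
    ring
  · obtain ⟨m, rfl⟩ := ho
    have hodd1 : ¬ Even (2 * m + 1) := by rw [Nat.even_iff]; omega
    have hodd3 : ¬ Even (2 * m + 3) := by rw [Nat.even_iff]; omega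
    rw [show 2 * m + 1 + 1 = 2 * (m + 1) from by omega,
      show 2 * m + 1 + 2 = 2 * m + 3 from by omega]
    have hev2 : Even (2 * (m + 1)) := ⟨m + 1, by omega⟩
    simp only [Tq, if_neg hodd1, if_pos hev2, if_neg hodd3]
    rw [show 2 * m + 1 - 1 = 2 * m from by omega,
      show 2 * m + 1 + 1 = 2 * (m + 1) from by omega,
      show 2 * m + 3 - 1 = 2 * (m + 1) from by omega,
      show 2 * m + 3 + 1 = 2 * (m + 2) from by omega,
      show (2 * m) / 2 = m from by omega,
      show 2 * (m + 1) / 2 = m + 1 from by omega,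
      show 2 * (m + 2) / 2 = m + 2 from by omega]
    have hm1 : ((m : ℚ) + 1) ≠ 0 := by positivity
    have hm2 : ((m : ℚ) + 2) ≠ 0 := by positivity
    have ez : (Nat.choose (2 * (m + 2)) (m + 2) : ℚ)
        = 2 * (2 * (m : ℚ) + 3) * (Nat.choose (2 * (m + 1)) (m + 1) : ℚ) / ((m : ℚ) + 2) := by
      rw [eq_div_iff hm2]
      have h := cast_central_succ (m + 1)
      rw [show m + 1 + 1 = m + 2 from by omega,
        show 2 * (m + 1 + 1) = 2 * (m + 2) from by omega] at h
      push_cast at h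
      linear_combination h
    have ey : (Nat.choose (2 * (m + 1)) (m + 1) : ℚ)
        = 2 * (2 * (m : ℚ) + 1) * (Nat.choose (2 * m) m : ℚ) / ((m : ℚ) + 1) := by
      rw [eq_div_iff hm1]
      linear_combination cast_central_succ m
    rw [ez, ey, pow4_odd m, pow_succ,
      show 2 * m + 3 = 2 * (m + 1) + 1 from by omega, pow4_odd (m + 1), pow_succ]
    have h16 : ((16 : ℚ) ^ m) ≠ 0 := by positivity
    have h2m1 : (2 * (m : ℚ) + 1) ≠ 0 := by positivity
    have h2m3 : (2 * (m : ℚ) + 3) ≠ 0 := by positivity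
    push_cast
    field_simp
    ring

private lemma base1 : Sq 1 = Tq 1 := by
  have c1 : Nat.choose 2 1 = 2 := rfl
  have hS : Sq 1 = 7 / 8 := by
    rw [Sq, Finset.sum_range_succ, Finset.sum_range_succ, Finset.sum_range_zero]
    norm_num [Fq, c1]
  have hT : Tq 1 = 7 / 8 := by
    rw [Tq, if_neg (by decide)]
    norm_num [c1]
  rw [hS, hT]

private lemma base2 : Sq 2 = Tq 2 := by
  have c1 : Nat.choose 2 1 = 2 := rfl
  have c2 : Nat.choose 3 1 = 3 := rfl
  have c3 : Nat.choose 4 2 = 6 := rfl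
  have hS : Sq 2 = 17 / 24 := by
    rw [Sq, Finset.sum_range_succ, Finset.sum_range_succ, Finset.sum_range_succ,
      Finset.sum_range_zero]
    norm_num [Fq, c1, c2, c3]
  have hT : Tq 2 = 17 / 24 := by
    rw [Tq, if_pos (by decide)]
    norm_num [c1]
  rw [hS, hT]

private lemma S_eq_T : ∀ m : ℕ, Sq (m + 1) = Tq (m + 1) ∧ Sq (m + 2) = Tq (m + 2) := by
  intro m
  induction m with
  | zero => exact ⟨base1, base2⟩
  | succ p ih =>
    obtain ⟨h1, h2⟩ := ih
    constructor
    · rw [show p + 1 + 1 = p + 2 from by omega]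
      exact h2
    · have hS := rec_S (p + 1)
      have hT := rec_T (p + 1) (by omega)
      rw [show p + 1 + 1 = p + 2 from by omega, show p + 1 + 2 = p + 3 from by omega]
        at hS hT
      rw [h1, h2] at hS
      have hc : ((p : ℚ) + 2) * ((p : ℚ) + 4) ^ 3 ≠ 0 := by positivity
      rw [show p + 1 + 2 = p + 3 from by omega]
      refine mul_left_cancel₀ hc ?_
      push_cast at hS hT
      linear_combination hT - hS

theorem id3_even (n : ℕ) (hn : Even n) (hn0 : 0 < n) :
    ∑ k ∈ Finset.range (n + 1),
        (Nat.choose n k * Nat.choose (n + k) k * Nat.choose (2 * k) k : ℚ)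
          / ((-4) ^ k * (k + 1) ^ 3)
      = -2 / ((n : ℚ) * (n + 1))
          + ((2 * (n : ℚ) + 1) ^ 2 / ((n : ℚ) * (n + 1)))
              * (Nat.choose n (n / 2) : ℚ) ^ 2 / 16 ^ (n / 2) := by
  have h1 : Sq n = Tq n := by
    have h := (S_eq_T (n - 1)).1
    rwa [show n - 1 + 1 = n from by omega] at h
  have h0 : (∑ k ∈ Finset.range (n + 1),
      (Nat.choose n k * Nat.choose (n + k) k * Nat.choose (2 * k) k : ℚ)
        / ((-4) ^ k * (k + 1) ^ 3)) = Sq n := rfl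
  rw [h0, h1, Tq, if_pos hn]
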